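/- Fix V > 0 and a Bond number B > 0, set κ := √B and λ*₁ := (4V/π)·[1 − 4I₂(κ)/(κ·I₁(κ))]^{−1}. Then for every h ∈ M_V, the squared fundamental shallow sloshing frequency with one azimuthal nodal line satisfies λ_{1,1}(h) := Ω_{1,1}(h)² ≤ λ*₁. -/

import Mathlib

/-- Modified Bessel function of the first kind of (natural) order `n`,
`I_n(x) = Σ_{k=0}^∞ (x/2)^{2k+n} / (k! Γ(k+n+1))`. -/
noncomputable def besselI (n : ℕ) (x : ℝ) : ℝ :=
  ∑' k : ℕ, (x / 2) ^ (2 * k + n) / ((k.factorial : ℝ) * Real.Gamma (k + n + 1))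

/-- `h ∈ M_V`: continuous, nonnegative on `[0,1]`, with `∫_0^1 h(r) r dr = V/(2π)`. -/
def MemMV (V : ℝ) (h : ℝ → ℝ) : Prop :=
  ContinuousOn h (Set.Icc (0 : ℝ) 1) ∧ (∀ r ∈ Set.Icc (0 : ℝ) 1, 0 ≤ h r) ∧
    (∫ r in (0 : ℝ)..1, h r * r) = V / (2 * Real.pi)

/-- The energy  for sloshing with one azimuthal nodal line. -/
noncomputable def energyR1 (B : ℝ) (h ψ ζ : ℝ → ℝ) : ℝ :=
  (1 / 2) * (∫ r in (0 : ℝ)..1, h r * ((deriv ψ r) ^ 2 + (ψ r) ^ 2 / r ^ 2) * r) +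
    (1 / 2) * (∫ r in (0 : ℝ)..1,
      ((ζ r) ^ 2 + (1 / B) * ((deriv ζ r) ^ 2 + (ζ r) ^ 2 / r ^ 2)) * r)

/-- The fundamental shallow sloshing frequency with one azimuthal nodal line,
. -/
noncomputable def OmegaR1 (B : ℝ) (h : ℝ → ℝ) : ℝ :=
  sInf {E : ℝ | ∃ ψ ζ : ℝ → ℝ, ContDiff ℝ 1 ψ ∧ ContDiff ℝ 1 ζ ∧
    ψ 0 = 0 ∧ ζ 0 = 0 ∧ ζ 1 = 0 ∧
    (∫ r in (0 : ℝ)..1, ψ r * ζ r * r) = 1 ∧ E = energyR1 B h ψ ζ}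

noncomputable def acoef (k : ℕ) : ℝ := (1/2)^(2*k+1) / ((k.factorial : ℝ) * (k+1).factorial)
noncomputable def bcoef (k : ℕ) : ℝ := (1/2)^(2*k+2) / ((k.factorial : ℝ) * (k+2).factorial)

lemma acoef_pos (k : ℕ) : 0 < acoef k := by
  unfold acoef; positivity

lemma bcoef_pos (k : ℕ) : 0 < bcoef k := by
  unfold bcoef; positivity

/-- generic power-series function -/
noncomputable def pser (c : ℕ → ℝ) (e : ℕ → ℕ) (x : ℝ) : ℝ := ∑' k, c k * x ^ (e k)

/-- coefficients of the term-by-term derivative -/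
noncomputable def dcoef (c : ℕ → ℝ) (e : ℕ → ℕ) (k : ℕ) : ℝ := c k * (e k : ℝ)

lemma summable_of_abs_le_pow_div_factorial {f : ℕ → ℝ} (C y : ℝ)
    (h : ∀ k, |f k| ≤ C * (y ^ k / k.factorial)) : Summable f :=
  Summable.of_norm_bounded ((Real.summable_pow_div_factorial y).mul_left C)
    (fun k => by simpa [Real.norm_eq_abs] using h k)

lemma C_nonneg {c : ℕ → ℝ} {C y : ℝ} (hc : ∀ k, |c k| ≤ C * (y ^ k / k.factorial)) :
    0 ≤ C := by
  have := (abs_nonneg (c 0)).trans (hc 0)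
  simpa using this

lemma nat_le_aux (k : ℕ) : ((2*k+4 : ℕ) : ℝ) ≤ 4 * 4 ^ k := by
  have h : 2*k+4 ≤ 4 * 4 ^ k := by
    induction k with
    | zero => norm_num
    | succ n ih =>
      have h1 : 1 ≤ 4 ^ n := Nat.one_le_pow _ _ (by norm_num)
      rw [pow_succ]
      nlinarith
  exact_mod_cast h

lemma summable_gen (c : ℕ → ℝ) (e : ℕ → ℕ) (C y : ℝ) (hy : 0 ≤ y)
    (hc : ∀ k, |c k| ≤ C * (y ^ k / k.factorial))
    (he : ∀ k, e k ≤ 2 * k + 4) (t : ℝ) :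
    Summable (fun k => c k * t ^ (e k)) := by
  set M := max |t| 1 with hMdef
  have hM1 : (1:ℝ) ≤ M := le_max_right _ _
  have hMt : |t| ≤ M := le_max_left _ _
  have hM0 : (0:ℝ) ≤ M := le_trans zero_le_one hM1
  have hC := C_nonneg hc
  apply summable_of_abs_le_pow_div_factorial (C * M^4) (y * M^2)
  intro k
  have h1 : |t| ^ (e k) ≤ M ^ (2*k+4) :=
    le_trans (pow_le_pow_left₀ (abs_nonneg t) hMt _) (pow_le_pow_right₀ hM1 (he k))
  calc |c k * t ^ e k| = |c k| * |t| ^ (e k) := by rw [abs_mul, abs_pow]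
    _ ≤ (C * (y^k / k.factorial)) * M ^ (2*k+4) := by
        apply mul_le_mul (hc k) h1 (by positivity)
        exact mul_nonneg hC (by positivity)
    _ = (C * M^4) * ((y * M^2)^k / k.factorial) := by
        rw [pow_add, pow_mul, mul_pow]; ring

lemma dcoef_bound {c : ℕ → ℝ} {e : ℕ → ℕ} {C y : ℝ} (hy : 0 ≤ y)
    (hc : ∀ k, |c k| ≤ C * (y ^ k / k.factorial))
    (he : ∀ k, e k ≤ 2 * k + 4) :
    ∀ k, |dcoef c e k| ≤ (4*C) * ((4*y) ^ k / k.factorial) := by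
  intro k
  have hC := C_nonneg hc
  have h1 : ((e k : ℕ) : ℝ) ≤ 4 * 4^k := by
    calc ((e k : ℕ) : ℝ) ≤ ((2*k+4 : ℕ) : ℝ) := by exact_mod_cast he k
      _ ≤ 4 * 4^k := nat_le_aux k
  calc |dcoef c e k| = |c k| * ((e k : ℕ) : ℝ) := by
        rw [dcoef, abs_mul, Nat.abs_cast]
    _ ≤ (C * (y^k / k.factorial)) * (4 * 4^k) := by
        apply mul_le_mul (hc k) h1 (by positivity)
        exact mul_nonneg hC (div_nonneg (pow_nonneg hy k) (by positivity))
    _ = (4*C) * ((4*y)^k / k.factorial) := by rw [mul_pow]; ring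

lemma hasDerivAt_pser (c : ℕ → ℝ) (e : ℕ → ℕ) (C y : ℝ) (hy : 0 ≤ y)
    (hc : ∀ k, |c k| ≤ C * (y ^ k / k.factorial))
    (he : ∀ k, e k ≤ 2 * k + 4) (x : ℝ) :
    HasDerivAt (pser c e) (pser (dcoef c e) (fun k => e k - 1) x) x := by
  have hC := C_nonneg hc
  set R := |x| + 1 with hRdef
  have hR1 : (1:ℝ) ≤ R := by rw [hRdef]; linarith [abs_nonneg x]
  have hR0 : (0:ℝ) ≤ R := zero_le_one.trans hR1
  have hx : x ∈ Metric.ball (0:ℝ) R := by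
    simp only [Metric.mem_ball, Real.dist_eq, sub_zero, hRdef]
    linarith
  have hu : Summable (fun k : ℕ => (4*C*R^4) * ((4*y*R^2) ^ k / k.factorial)) :=
    (Real.summable_pow_div_factorial (4*y*R^2)).mul_left _
  have hder : ∀ (k : ℕ) (t : ℝ), t ∈ Metric.ball (0:ℝ) R →
      HasDerivAt (fun z => c k * z ^ (e k)) (dcoef c e k * t ^ (e k - 1)) t := by
    intro k t _
    simpa [dcoef, mul_assoc] using (hasDerivAt_pow (e k) t).const_mul (c k)
  have hbd : ∀ (k : ℕ) (t : ℝ), t ∈ Metric.ball (0:ℝ) R →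
      ‖dcoef c e k * t ^ (e k - 1)‖ ≤ (4*C*R^4) * ((4*y*R^2) ^ k / k.factorial) := by
    intro k t ht
    have ht' : |t| ≤ R := by
      have := mem_ball_iff_norm.mp ht
      simp only [sub_zero, Real.norm_eq_abs] at this
      exact this.le
    have h1 : |t| ^ (e k - 1) ≤ R ^ (2*k+4) :=
      le_trans (pow_le_pow_left₀ (abs_nonneg t) ht' _)
        (pow_le_pow_right₀ hR1 (le_trans (Nat.sub_le _ _) (he k)))
    calc ‖dcoef c e k * t ^ (e k - 1)‖ = |dcoef c e k| * |t| ^ (e k - 1) := by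
          rw [Real.norm_eq_abs, abs_mul, abs_pow]
      _ ≤ ((4*C) * ((4*y)^k / k.factorial)) * R ^ (2*k+4) := by
          apply mul_le_mul (dcoef_bound hy hc he k) h1 (by positivity)
          positivity
      _ = (4*C*R^4) * ((4*y*R^2) ^ k / k.factorial) := by
          rw [pow_add, pow_mul, mul_pow, mul_pow]; ring
  have hg0 : Summable (fun k => c k * x ^ (e k)) := summable_gen c e C y hy hc he x
  exact hasDerivAt_tsum_of_isPreconnected hu Metric.isOpen_ball
    (convex_ball (0:ℝ) R).isPreconnected hder hbd hx hg0 hx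

lemma fact_cast_pos (k : ℕ) : (0:ℝ) < (k.factorial : ℝ) := by
  exact_mod_cast k.factorial_pos

lemma acoef_le' (k : ℕ) : |acoef k| ≤ 1 / k.factorial := by
  rw [abs_of_pos (acoef_pos k)]
  unfold acoef
  apply div_le_div₀ (by norm_num) (pow_le_one₀ (by norm_num) (by norm_num)) (fact_cast_pos k)
  exact le_mul_of_one_le_right (fact_cast_pos k).le
    (by exact_mod_cast (k+1).factorial_pos)

lemma acoef_le (k : ℕ) : |acoef k| ≤ 1 * ((1:ℝ) ^ k / k.factorial) := by
  simpa using acoef_le' k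

lemma bcoef_le' (k : ℕ) : |bcoef k| ≤ 1 / k.factorial := by
  rw [abs_of_pos (bcoef_pos k)]
  unfold bcoef
  apply div_le_div₀ (by norm_num) (pow_le_one₀ (by norm_num) (by norm_num)) (fact_cast_pos k)
  exact le_mul_of_one_le_right (fact_cast_pos k).le
    (by exact_mod_cast (k+2).factorial_pos)

lemma bcoef_le (k : ℕ) : |bcoef k| ≤ 1 * ((1:ℝ) ^ k / k.factorial) := by
  simpa using bcoef_le' k

lemma sixteen_pow (k : ℕ) : (16:ℝ)^k = 4^k * 4^k := by
  rw [← mul_pow]; norm_num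

lemma nat_le_aux' (k : ℕ) : 2*(k:ℝ)+4 ≤ 4 * 4^k := by
  have := nat_le_aux k; push_cast at this; linarith

lemma pow4_pos (k : ℕ) : (0:ℝ) < 4^k := by positivity

lemma acoef_mul_bound (p : ℝ) (k : ℕ) (hp : |p| ≤ 16*16^k) :
    |acoef k * p| ≤ 16 * ((16:ℝ)^k / k.factorial) := by
  rw [abs_mul]
  calc |acoef k| * |p| ≤ (1 / k.factorial) * (16*16^k) :=
        mul_le_mul (acoef_le' k) hp (abs_nonneg p) (by positivity)
    _ = 16 * ((16:ℝ)^k / k.factorial) := by ring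

lemma poly_bound1 (k : ℕ) : |(2*(k:ℝ)+1)| ≤ 16*16^k := by
  rw [abs_of_nonneg (by positivity)]
  have h := nat_le_aux' k
  have h2 := pow4_pos k
  rw [sixteen_pow]
  nlinarith

lemma poly_bound2 (k : ℕ) : |(2*(k:ℝ)+1)*(2*(k:ℝ))| ≤ 16*16^k := by
  rw [abs_of_nonneg (by positivity)]
  have h := nat_le_aux' k
  have h2 := pow4_pos k
  rw [sixteen_pow]
  nlinarith [sq_nonneg ((k:ℝ))]

lemma poly_bound3 (k : ℕ) : |4*(k:ℝ)^2+4*(k:ℝ)| ≤ 16*16^k := by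
  rw [abs_of_nonneg (by positivity)]
  have h := nat_le_aux' k
  have h2 := pow4_pos k
  rw [sixteen_pow]
  nlinarith [sq_nonneg ((k:ℝ))]

noncomputable def uu : ℝ → ℝ := pser acoef (fun k => 2*k+1)
noncomputable def U1 : ℝ → ℝ := pser (dcoef acoef (fun k => 2*k+1)) (fun k => 2*k)
noncomputable def U2 : ℝ → ℝ :=
  pser (dcoef (dcoef acoef (fun k => 2*k+1)) (fun k => 2*k)) (fun k => 2*k-1)
noncomputable def uq : ℝ → ℝ := pser acoef (fun k => 2*k)
noncomputable def vv : ℝ → ℝ := pser bcoef (fun k => 2*k+2)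

lemma pser_congr_e (c : ℕ → ℝ) {e e' : ℕ → ℕ} (h : ∀ k, e k = e' k) :
    pser c e = pser c e' := by
  funext x; exact tsum_congr fun k => by rw [h k]

lemma hasDerivAt_uu (x : ℝ) : HasDerivAt uu (U1 x) x := by
  have h := hasDerivAt_pser acoef (fun k => 2*k+1) 1 1 zero_le_one acoef_le
    (fun k => by change 2*k+1 ≤ 2*k+4; omega) x
  have he : pser (dcoef acoef fun k => 2*k+1) (fun k => (2*k+1) - 1) = U1 :=
    pser_congr_e _ (fun k => by omega)
  rw [he] at h
  exact h

lemma dcoef_acoef_bound : ∀ k, |dcoef acoef (fun k => 2*k+1) k| ≤ 4 * ((4:ℝ)^k / k.factorial) :=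
  fun k => by
    simpa using dcoef_bound zero_le_one acoef_le (fun k => by change 2*k+1 ≤ 2*k+4; omega) k

lemma hasDerivAt_U1 (x : ℝ) : HasDerivAt U1 (U2 x) x := by
  have h := hasDerivAt_pser (dcoef acoef (fun k => 2*k+1)) (fun k => 2*k) 4 4
    (by norm_num) dcoef_acoef_bound (fun k => by change 2*k ≤ 2*k+4; omega) x
  exact h

lemma cont_uu : Continuous uu := by
  have hd : Differentiable ℝ uu := fun x => (hasDerivAt_uu x).differentiableAt
  exact hd.continuous

lemma cont_U1 : Continuous U1 := by
  have hd : Differentiable ℝ U1 := fun x => (hasDerivAt_U1 x).differentiableAt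
  exact hd.continuous

lemma cont_uq : Continuous uq := by
  have : Differentiable ℝ uq := fun x =>
    (hasDerivAt_pser acoef (fun k => 2*k) 1 1 zero_le_one acoef_le
      (fun k => by change 2*k ≤ 2*k+4; omega) x).differentiableAt
  exact this.continuous

lemma cont_vv : Continuous vv := by
  have : Differentiable ℝ vv := fun x =>
    (hasDerivAt_pser bcoef (fun k => 2*k+2) 1 1 zero_le_one bcoef_le
      (fun k => by change 2*k+2 ≤ 2*k+4; omega) x).differentiableAt
  exact this.continuous

lemma contDiff_uu : ContDiff ℝ 1 uu := by
  rw [contDiff_one_iff_deriv]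
  refine ⟨fun x => (hasDerivAt_uu x).differentiableAt, ?_⟩
  have : deriv uu = U1 := funext fun x => (hasDerivAt_uu x).deriv
  rw [this]; exact cont_U1

lemma uu_zero : uu 0 = 0 := by
  unfold uu pser
  convert tsum_zero with k
  simp

lemma summable_acoef_pow (x : ℝ) (m : ℕ) (hm : m ≤ 4) :
    Summable (fun k => acoef k * x ^ (2*k+m)) :=
  summable_gen acoef (fun k => 2*k+m) 1 1 zero_le_one acoef_le (fun k => by change 2*k+m ≤ 2*k+4; omega) x

lemma summable_acoef_mul_pow (p : ℕ → ℝ) (hp : ∀ k, |p k| ≤ 16*16^k) (x : ℝ) (m : ℕ)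
    (hm : m ≤ 4) : Summable (fun k => acoef k * p k * x ^ (2*k+m)) :=
  summable_gen (fun k => acoef k * p k) (fun k => 2*k+m) 16 16 (by norm_num)
    (fun k => acoef_mul_bound (p k) k (hp k)) (fun k => by change 2*k+m ≤ 2*k+4; omega) x

lemma uu_eq_mul_uq (x : ℝ) : uu x = x * uq x := by
  unfold uu uq pser
  rw [← tsum_mul_left]
  exact tsum_congr fun k => by ring

lemma uq_eq_div (x : ℝ) (hx : x ≠ 0) : uq x = uu x / x := by
  rw [uu_eq_mul_uq]; field_simp

lemma acoef_rec (k : ℕ) : acoef (k+1) * (4*((k:ℝ)+1)*((k:ℝ)+2)) = acoef k := by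
  unfold acoef
  have h1 : ((k+1+1).factorial : ℝ) = ((k:ℝ)+2) * (k+1).factorial := by
    rw [Nat.factorial_succ]; push_cast; ring
  have h2 : ((k+1).factorial : ℝ) = ((k:ℝ)+1) * k.factorial := by
    rw [Nat.factorial_succ]; push_cast; ring
  rw [h1, h2]
  have hk0 : ((k.factorial : ℝ)) ≠ 0 := (fact_cast_pos k).ne'
  have hk1 : (((k+1).factorial : ℝ)) ≠ 0 := (fact_cast_pos (k+1)).ne'
  rw [h2] at hk1
  field_simp
  ring

lemma bcoef_mul (k : ℕ) : bcoef k * (2*(k:ℝ)+4) = acoef k := by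
  unfold acoef bcoef
  have h1 : ((k+2).factorial : ℝ) = ((k:ℝ)+2) * (k+1).factorial := by
    rw [show k+2 = (k+1)+1 from rfl, Nat.factorial_succ]; push_cast; ring
  rw [h1]
  have hk0 : ((k.factorial : ℝ)) ≠ 0 := (fact_cast_pos k).ne'
  have hk1 : (((k+1).factorial : ℝ)) ≠ 0 := (fact_cast_pos (k+1)).ne'
  have hk2 : ((k:ℝ)+2) ≠ 0 := by positivity
  field_simp
  ring

lemma uu_apply (x : ℝ) : uu x = ∑' k, acoef k * x^(2*k+1) := rfl

lemma U1_apply (x : ℝ) : U1 x = ∑' k, acoef k * (2*(k:ℝ)+1) * x^(2*k) := by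
  unfold U1 pser dcoef
  exact tsum_congr fun k => by push_cast; ring

lemma U2_apply (x : ℝ) : U2 x = ∑' k, acoef k * ((2*(k:ℝ)+1)*(2*(k:ℝ))) * x^(2*k-1) := by
  unfold U2 pser dcoef
  exact tsum_congr fun k => by push_cast; ring

lemma ode (x : ℝ) : x^2 * U2 x + x * U1 x - (x^2+1) * uu x = 0 := by
  have hs0 : Summable (fun k => acoef k * x^(2*k+1)) := summable_acoef_pow x 1 (by norm_num)
  have hs3 : Summable (fun k => acoef k * x^(2*k+3)) := summable_acoef_pow x 3 (by norm_num)
  have hs1 : Summable (fun k => acoef k * (2*(k:ℝ)+1) * x^(2*k+1)) :=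
    summable_acoef_mul_pow _ poly_bound1 x 1 (by norm_num)
  have hs2 : Summable (fun k => acoef k * ((2*(k:ℝ)+1)*(2*(k:ℝ))) * x^(2*k+1)) :=
    summable_acoef_mul_pow _ poly_bound2 x 1 (by norm_num)
  have hsf : Summable (fun k => acoef k * (4*(k:ℝ)^2+4*(k:ℝ)) * x^(2*k+1)) :=
    summable_acoef_mul_pow _ poly_bound3 x 1 (by norm_num)
  have h2 : x^2 * U2 x = ∑' k, acoef k * ((2*(k:ℝ)+1)*(2*(k:ℝ))) * x^(2*k+1) := by
    rw [U2_apply, ← tsum_mul_left]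
    apply tsum_congr; intro k
    rcases k with _ | k
    · norm_num
    · have he : 2*(k+1)-1 = 2*k+1 := by omega
      rw [he]
      push_cast; ring
  have h1 : x * U1 x = ∑' k, acoef k * (2*(k:ℝ)+1) * x^(2*k+1) := by
    rw [U1_apply, ← tsum_mul_left]
    exact tsum_congr fun k => by ring
  have h3 : x^2 * uu x = ∑' k, acoef k * x^(2*k+3) := by
    rw [uu_apply, ← tsum_mul_left]
    exact tsum_congr fun k => by ring
  have hA : (∑' k, acoef k * ((2*(k:ℝ)+1)*(2*(k:ℝ))) * x^(2*k+1))
      + (∑' k, acoef k * (2*(k:ℝ)+1) * x^(2*k+1))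
      - (∑' k, acoef k * x^(2*k+1))
      = ∑' k, acoef k * (4*(k:ℝ)^2+4*(k:ℝ)) * x^(2*k+1) := by
    rw [← Summable.tsum_add hs2 hs1, ← Summable.tsum_sub (hs2.add hs1) hs0]
    exact tsum_congr fun k => by ring
  have key : ∑' k, acoef k * (4*(k:ℝ)^2+4*(k:ℝ)) * x^(2*k+1)
      = ∑' k, acoef k * x^(2*k+3) := by
    rw [Summable.tsum_eq_zero_add hsf]
    have h0 : acoef 0 * (4*((0:ℕ):ℝ)^2+4*((0:ℕ):ℝ)) * x^(2*0+1) = 0 := by norm_num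
    rw [h0, zero_add]
    apply tsum_congr; intro k
    calc acoef (k+1) * (4*((k+1:ℕ):ℝ)^2+4*((k+1:ℕ):ℝ)) * x^(2*(k+1)+1)
        = (acoef (k+1) * (4*((k:ℝ)+1)*((k:ℝ)+2))) * x^(2*k+3) := by push_cast; ring
      _ = acoef k * x^(2*k+3) := by rw [acoef_rec]
  calc x^2*U2 x + x*U1 x - (x^2+1)*uu x
      = (x^2*U2 x + x*U1 x - uu x) - x^2*uu x := by ring
    _ = ((∑' k, acoef k * ((2*(k:ℝ)+1)*(2*(k:ℝ))) * x^(2*k+1))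
          + (∑' k, acoef k * (2*(k:ℝ)+1) * x^(2*k+1))
          - (∑' k, acoef k * x^(2*k+1)))
        - (∑' k, acoef k * x^(2*k+3)) := by rw [h2, h1, h3, uu_apply]
    _ = 0 := by rw [hA, key, sub_self]

lemma U2_eq_of_ne {x : ℝ} (hx : x ≠ 0) : U2 x = uu x + uu x / x^2 - U1 x / x := by
  have h := ode x
  field_simp
  linear_combination h

lemma summable_bcoef_pow (x : ℝ) (m : ℕ) (hm : m ≤ 4) :
    Summable (fun k => bcoef k * x ^ (2*k+m)) :=
  summable_gen bcoef (fun k => 2*k+m) 1 1 zero_le_one bcoef_le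
    (fun k => by change 2*k+m ≤ 2*k+4; omega) x

lemma dcoef_bcoef_bound : ∀ k, |dcoef bcoef (fun k => 2*k+4) k| ≤ 4 * ((4:ℝ)^k / k.factorial) :=
  fun k => by simpa using dcoef_bound zero_le_one bcoef_le (fun k => by change 2*k+4 ≤ 2*k+4; omega) k

lemma hasDerivAt_sq_vv (x : ℝ) : HasDerivAt (fun t => t^2 * vv t) (x^2 * uu x) x := by
  have hfun : (fun t : ℝ => t^2 * vv t) = pser bcoef (fun k => 2*k+4) := by
    funext t
    unfold vv pser
    rw [← tsum_mul_left]
    exact tsum_congr fun k => by ring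
  have h := hasDerivAt_pser bcoef (fun k => 2*k+4) 1 1 zero_le_one bcoef_le
    (fun k => by change 2*k+4 ≤ 2*k+4; omega) x
  have hval : pser (dcoef bcoef (fun k => 2*k+4)) (fun k => (2*k+4) - 1) x = x^2 * uu x := by
    unfold pser dcoef
    rw [uu_apply, ← tsum_mul_left]
    apply tsum_congr; intro k
    show bcoef k * (((2*k+4 : ℕ)):ℝ) * x^(2*k+4-1) = _
    have he : 2*k+4-1 = 2*k+3 := by omega
    rw [he]
    calc bcoef k * (((2*k+4 : ℕ)):ℝ) * x^(2*k+3)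
        = (bcoef k * (2*(k:ℝ)+4)) * x^(2*k+3) := by push_cast; ring
      _ = acoef k * x^(2*k+3) := by rw [bcoef_mul]
      _ = x^2 * (acoef k * x^(2*k+1)) := by ring
  rw [hfun]
  rw [← hval]
  exact h

lemma uu_pos {x : ℝ} (hx : 0 < x) : 0 < uu x := by
  unfold uu pser
  apply Summable.tsum_pos (summable_acoef_pow x 1 (by norm_num))
    (fun k => mul_nonneg (acoef_pos k).le (pow_nonneg hx.le _)) 0
  exact mul_pos (acoef_pos 0) (pow_pos hx _)

lemma vv_nonneg {x : ℝ} (hx : 0 < x) : 0 ≤ vv x := by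
  unfold vv pser
  exact tsum_nonneg fun k => mul_nonneg (bcoef_pos k).le (pow_nonneg hx.le _)

lemma four_bcoef_le_acoef (k : ℕ) : 4 * bcoef k ≤ acoef k := by
  unfold acoef bcoef
  have h1 : ((k+2).factorial : ℝ) = ((k:ℝ)+2) * (k+1).factorial := by
    rw [show k+2 = (k+1)+1 from rfl, Nat.factorial_succ]; push_cast; ring
  rw [h1, ← mul_div_assoc]
  rw [div_le_div_iff₀ (by positivity) (by positivity)]
  have hk0 : (0:ℝ) < k.factorial := fact_cast_pos k
  have hk1 : (0:ℝ) < (k+1).factorial := fact_cast_pos (k+1)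
  have hp : (0:ℝ) < (1/2:ℝ)^(2*k+1) := by positivity
  calc 4 * (1/2)^(2*k+2) * ((k.factorial:ℝ) * (k+1).factorial)
      = 2 * ((1/2)^(2*k+1) * ((k.factorial:ℝ) * (k+1).factorial)) := by ring
    _ ≤ ((k:ℝ)+2) * ((1/2)^(2*k+1) * ((k.factorial:ℝ) * (k+1).factorial)) := by
        apply mul_le_mul_of_nonneg_right (by linarith [Nat.cast_nonneg (α := ℝ) k]) (by positivity)
    _ = (1/2)^(2*k+1) * ((k.factorial:ℝ) * (((k:ℝ)+2) * (k+1).factorial)) := by ring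

lemma key_pos {x : ℝ} (hx : 0 < x) : 4 * vv x < x * uu x := by
  have h1 : x * uu x = ∑' k, acoef k * x^(2*k+2) := by
    rw [uu_apply, ← tsum_mul_left]
    exact tsum_congr fun k => by ring
  have h2 : 4 * vv x = ∑' k, 4 * bcoef k * x^(2*k+2) := by
    unfold vv pser
    rw [← tsum_mul_left]
    exact tsum_congr fun k => by ring
  rw [h1, h2]
  apply Summable.tsum_lt_tsum (i := 1)
  · intro k
    apply mul_le_mul_of_nonneg_right (four_bcoef_le_acoef k) (by positivity)
  · apply mul_lt_mul_of_pos_right _ (by positivity)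
    norm_num [acoef, bcoef, Nat.factorial]
  · have hb := (summable_bcoef_pow x 2 (by norm_num)).mul_left 4
    exact hb.congr fun k => by ring
  · exact summable_acoef_pow x 2 (by norm_num)

lemma vv_apply (x : ℝ) : vv x = ∑' k, bcoef k * x^(2*k+2) := rfl

lemma besselI_one (x : ℝ) : besselI 1 x = uu x := by
  unfold besselI
  rw [uu_apply]
  apply tsum_congr; intro k
  push_cast
  have hg : Real.Gamma ((k:ℝ) + 1 + 1) = ((k+1).factorial : ℝ) := by
    rw [show ((k:ℝ)+1+1) = ((k+1:ℕ):ℝ)+1 by push_cast; ring, Real.Gamma_nat_eq_factorial]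
  rw [hg]
  rw [div_pow]
  unfold acoef
  rw [div_pow, one_pow]
  ring

lemma besselI_two (x : ℝ) : besselI 2 x = vv x := by
  unfold besselI
  rw [vv_apply]
  apply tsum_congr; intro k
  push_cast
  have hg : Real.Gamma ((k:ℝ) + 2 + 1) = ((k+2).factorial : ℝ) := by
    rw [show ((k:ℝ)+2+1) = ((k+2:ℕ):ℝ)+1 by push_cast; ring, Real.Gamma_nat_eq_factorial]
  rw [hg]
  rw [div_pow]
  unfold bcoef
  rw [div_pow, one_pow]
  ring

set_option maxHeartbeats 2000000 in
theorem isoperimetric_radial_m_one (V B : ℝ) (hV : 0 < V) (hB : 0 < B)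
    (κ : ℝ) (hκ : κ = Real.sqrt B)
    (lam1 : ℝ)
    (hlam : lam1 = (4 * V / Real.pi) * (1 - 4 * besselI 2 κ / (κ * besselI 1 κ))⁻¹) :
    ∀ h : ℝ → ℝ, MemMV V h → (OmegaR1 B h) ^ 2 ≤ lam1 := by
  intro h hMem
  obtain ⟨hcont, hpos, hVol⟩ := hMem
  have hπ := Real.pi_pos
  have hκpos : 0 < κ := by rw [hκ]; exact Real.sqrt_pos.2 hB
  have hBκ : κ^2 = B := by rw [hκ]; exact Real.sq_sqrt hB.le
  have huuκ : 0 < uu κ := uu_pos hκpos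
  set D : ℝ := 1/4 - vv κ / (κ * uu κ) with hDdef
  have hDpos : 0 < D := by
    have h4 := key_pos hκpos
    rw [hDdef, sub_pos, div_lt_iff₀ (by positivity)]
    linarith
  clear_value D
  set t : ℝ := Real.sqrt (Real.pi / (V * D)) with htdef
  have htpos : 0 < t := Real.sqrt_pos.2 (by positivity)
  have ht2 : t^2 = Real.pi / (V*D) := Real.sq_sqrt (by positivity)
  clear_value t
  set a : ℝ := Real.sqrt t with hadef
  have hapos : 0 < a := Real.sqrt_pos.2 htpos
  have ha2 : a^2 = t := Real.sq_sqrt htpos.le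
  clear_value a
  set s : ℝ := 1/(a*D) with hsdef
  clear_value s
  set g : ℝ → ℝ := fun r => r - (uu κ)⁻¹ * uu (κ*r) with hgdef
  set G1 : ℝ → ℝ := fun r => 1 - (uu κ)⁻¹ * (κ * U1 (κ*r)) with hG1def
  set gq : ℝ → ℝ := fun r => 1 - (uu κ)⁻¹ * (κ * uq (κ*r)) with hgqdef
  set ψ : ℝ → ℝ := fun r => a * r with hψdef
  set ζ : ℝ → ℝ := fun r => s * g r with hζdef
  -- derivatives
  have hlin : ∀ r : ℝ, HasDerivAt (fun y : ℝ => κ * y) κ r := fun r => by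
    simpa using (hasDerivAt_id r).const_mul κ
  have hgd : ∀ r, HasDerivAt g (G1 r) r := by
    intro r
    have hcomp : HasDerivAt (fun y => uu (κ*y)) (κ * U1 (κ*r)) r := by
      exact ((hasDerivAt_uu (κ*r)).comp r (hlin r)).congr_deriv (mul_comm _ _)
    have hd := (hasDerivAt_id r).sub (hcomp.const_mul ((uu κ)⁻¹))
    simp only [hgdef, hG1def]
    refine hd.congr_deriv ?_
    rfl
  have hζd : ∀ r, HasDerivAt ζ (s * G1 r) r := fun r => by
    simp only [hζdef]
    exact (hgd r).const_mul s
  have hζderiv : ∀ r, deriv ζ r = s * G1 r := fun r => (hζd r).deriv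
  have hψderiv : ∀ r, deriv ψ r = a := fun r => by
    simp only [hψdef]
    simpa using ((hasDerivAt_id r).const_mul a).deriv
  -- regularity
  have hψc : ContDiff ℝ 1 ψ := contDiff_const.mul contDiff_id
  have hζc : ContDiff ℝ 1 ζ := by
    simp only [hζdef, hgdef]
    exact contDiff_const.mul (contDiff_id.sub
      (contDiff_const.mul (contDiff_uu.comp (contDiff_const.mul contDiff_id))))
  -- boundary values
  have hψ0 : ψ 0 = 0 := by simp [hψdef]
  have hζ0 : ζ 0 = 0 := by simp [hζdef, hgdef, uu_zero]
  have hg1 : g 1 = 0 := by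
    simp only [hgdef, mul_one]
    rw [inv_mul_cancel₀ huuκ.ne']
    ring
  have hζ1 : ζ 1 = 0 := by simp [hζdef, hg1]
  -- continuity
  have hκrcont : Continuous (fun r : ℝ => κ * r) := continuous_const.mul continuous_id
  have hgcont : Continuous g := by
    simp only [hgdef]
    exact continuous_id.sub (continuous_const.mul (cont_uu.comp hκrcont))
  have hG1cont : Continuous G1 := by
    simp only [hG1def]
    exact continuous_const.sub (continuous_const.mul (continuous_const.mul
      (cont_U1.comp hκrcont)))
  have hgqcont : Continuous gq := by
    simp only [hgqdef]
    exact continuous_const.sub (continuous_const.mul (continuous_const.mul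
      (cont_uq.comp hκrcont)))
  -- antiderivative Φ for the constraint
  set Φ : ℝ → ℝ := fun r => r^4/4 - (uu κ)⁻¹ * ((κ*r)^2 * vv (κ*r)) / κ^3 with hΦdef
  have hΦd : ∀ r, HasDerivAt Φ (g r * r^2) r := by
    intro r
    have h1 : HasDerivAt (fun y : ℝ => y^4/4) (r^3) r := by
      have := (hasDerivAt_pow 4 r).div_const 4
      norm_num at this
      exact this
    have h2 : HasDerivAt (fun y => (κ*y)^2 * vv (κ*y)) ((κ*r)^2 * uu (κ*r) * κ) r :=
      (hasDerivAt_sq_vv (κ*r)).comp r (hlin r)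
    have h3 := h1.sub ((h2.const_mul ((uu κ)⁻¹)).div_const (κ^3))
    simp only [hΦdef, hgdef]
    refine h3.congr_deriv ?_
    field_simp
  have hΦ0 : Φ 0 = 0 := by simp [hΦdef]
  have hΦ1 : Φ 1 = D := by
    simp only [hΦdef, hDdef, mul_one, one_pow]
    field_simp
  have hΦcont : Continuous Φ := by
    simp only [hΦdef]
    exact ((continuous_pow 4).div_const 4).sub
      ((continuous_const.mul ((hκrcont.pow 2).mul (cont_vv.comp hκrcont))).div_const _)
  have hconstr_int : ∫ r in (0:ℝ)..1, g r * r^2 = D := by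
    rw [intervalIntegral.integral_eq_sub_of_hasDerivAt (fun r _ => hΦd r)
      ((hgcont.mul (continuous_pow 2)).intervalIntegrable 0 1)]
    rw [hΦ1, hΦ0, sub_zero]
  have hcons : ∫ r in (0:ℝ)..1, ψ r * ζ r * r = 1 := by
    have heq : Set.EqOn (fun r => ψ r * ζ r * r) (fun r => (a*s) * (g r * r^2))
        (Set.uIcc 0 1) := fun r _ => by simp only [hψdef, hζdef]; ring
    rw [intervalIntegral.integral_congr heq, intervalIntegral.integral_const_mul,
      hconstr_int, hsdef]
    field_simp
  -- the ψ integral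
  have hIψ : ∫ r in (0:ℝ)..1, h r * ((deriv ψ r)^2 + (ψ r)^2/r^2) * r
      = 2*a^2 * (V/(2*Real.pi)) := by
    have hae : ∀ᵐ r ∂MeasureTheory.volume, r ∈ Set.uIoc (0:ℝ) 1 →
        h r * ((deriv ψ r)^2 + (ψ r)^2/r^2) * r = 2*a^2 * (h r * r) := by
      filter_upwards with r hr
      rw [Set.uIoc_of_le (by norm_num)] at hr
      have hr0 : r ≠ 0 := hr.1.ne'
      rw [hψderiv]
      simp only [hψdef]
      rw [mul_pow, mul_div_assoc, div_self (pow_ne_zero 2 hr0)]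
      ring
    rw [intervalIntegral.integral_congr_ae hae, intervalIntegral.integral_const_mul, hVol]
  -- the ζ integral
  set K : ℝ → ℝ := fun r => ((s*g r)^2 + (1/B)*((s*G1 r)^2 + (s*gq r)^2))*r with hKdef
  set A : ℝ → ℝ := fun r => s^2*((1/B)*(r*g r*G1 r) + Φ r) with hAdef
  have hAd : ∀ r ∈ Set.Ioo (0:ℝ) 1, HasDerivAt A (K r) r := by
    intro r hr
    have hr0 : r ≠ 0 := hr.1.ne'
    have hκr : κ*r ≠ 0 := mul_ne_zero hκpos.ne' hr0
    have hG1d : HasDerivAt G1 (-((uu κ)⁻¹ * (κ * (κ * U2 (κ*r))))) r := by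
      have hcomp : HasDerivAt (fun y => U1 (κ*y)) (κ * U2 (κ*r)) r := by
        exact ((hasDerivAt_U1 (κ*r)).comp r (hlin r)).congr_deriv (mul_comm _ _)
      have hd := (hasDerivAt_const r (1:ℝ)).sub (((hcomp.const_mul κ)).const_mul ((uu κ)⁻¹))
      simp only [hG1def]
      refine hd.congr_deriv ?_
      ring
    have hprod := ((hasDerivAt_id r).mul (hgd r)).mul hG1d
    have hsum := (hprod.const_mul (1/B)).add (hΦd r)
    have hAd0 := hsum.const_mul (s^2)
    simp only [hAdef]
    refine hAd0.congr_deriv ?_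
    simp only [hKdef]
    have hU2 := U2_eq_of_ne hκr
    have huqr : uq (κ*r) = uu (κ*r)/(κ*r) := uq_eq_div _ hκr
    simp only [hgdef, hG1def, hgqdef, Pi.mul_apply, id_eq]
    rw [hU2, huqr, ← hBκ]
    field_simp
    ring
  have hKcont : Continuous K := by
    simp only [hKdef]
    exact (((continuous_const.mul hgcont).pow 2).add (continuous_const.mul
      (((continuous_const.mul hG1cont).pow 2).add
        ((continuous_const.mul hgqcont).pow 2)))).mul continuous_id
  have hAcont : Continuous A := by
    simp only [hAdef]
    exact continuous_const.mul ((continuous_const.mul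
      ((continuous_id.mul hgcont).mul hG1cont)).add hΦcont)
  have hKint : ∫ r in (0:ℝ)..1, K r = s^2 * D := by
    rw [intervalIntegral.integral_eq_sub_of_hasDeriv_right_of_le (by norm_num)
      hAcont.continuousOn (fun x hx => (hAd x hx).hasDerivWithinAt)
      (hKcont.intervalIntegrable 0 1)]
    simp only [hAdef]
    rw [hg1, hΦ0, hΦ1]
    ring
  have hIζ : ∫ r in (0:ℝ)..1, ((ζ r)^2 + (1/B)*((deriv ζ r)^2 + (ζ r)^2/r^2))*r
      = s^2*D := by
    rw [← hKint]
    apply intervalIntegral.integral_congr_ae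
    filter_upwards with r hr
    rw [Set.uIoc_of_le (by norm_num)] at hr
    have hr0 : r ≠ 0 := hr.1.ne'
    rw [hζderiv]
    simp only [hζdef, hKdef]
    have hgr : g r = r * gq r := by
      simp only [hgdef, hgqdef]
      rw [uu_eq_mul_uq (κ*r)]
      ring
    rw [hgr]
    field_simp
  -- energy value
  have hD0 : D ≠ 0 := hDpos.ne'
  have ht0 : t ≠ 0 := htpos.ne'
  have hπ0 : Real.pi ≠ 0 := hπ.ne'
  have ha0 : a ≠ 0 := hapos.ne'
  have ht2' : t^2*(V*D) = Real.pi := by rw [ht2]; field_simp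
  have hE : energyR1 B h ψ ζ = t*V/Real.pi := by
    unfold energyR1
    rw [hIψ, hIζ, hsdef, div_pow, one_pow, mul_pow, ha2]
    field_simp
    linear_combination (-1) * ht2'
  -- conclusion
  have hnonneg : ∀ E ∈ {E : ℝ | ∃ ψ ζ : ℝ → ℝ, ContDiff ℝ 1 ψ ∧ ContDiff ℝ 1 ζ ∧
      ψ 0 = 0 ∧ ζ 0 = 0 ∧ ζ 1 = 0 ∧
      (∫ r in (0 : ℝ)..1, ψ r * ζ r * r) = 1 ∧ E = energyR1 B h ψ ζ}, 0 ≤ E := by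
    rintro E ⟨ψ', ζ', _, _, _, _, _, _, rfl⟩
    unfold energyR1
    have i1 : 0 ≤ ∫ r in (0:ℝ)..1, h r * ((deriv ψ' r)^2 + (ψ' r)^2/r^2) * r :=
      intervalIntegral.integral_nonneg (by norm_num)
        (fun u hu => mul_nonneg (mul_nonneg (hpos u hu) (by positivity)) hu.1)
    have i2 : 0 ≤ ∫ r in (0:ℝ)..1,
        ((ζ' r)^2 + (1/B)*((deriv ζ' r)^2 + (ζ' r)^2/r^2))*r :=
      intervalIntegral.integral_nonneg (by norm_num)
        (fun u hu => mul_nonneg (add_nonneg (sq_nonneg _) (mul_nonneg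
          (by positivity) (add_nonneg (sq_nonneg _)
            (div_nonneg (sq_nonneg _) (sq_nonneg _))))) hu.1)
    linarith
  have hmem : energyR1 B h ψ ζ ∈ {E : ℝ | ∃ ψ ζ : ℝ → ℝ, ContDiff ℝ 1 ψ ∧ ContDiff ℝ 1 ζ ∧
      ψ 0 = 0 ∧ ζ 0 = 0 ∧ ζ 1 = 0 ∧
      (∫ r in (0 : ℝ)..1, ψ r * ζ r * r) = 1 ∧ E = energyR1 B h ψ ζ} :=
    ⟨ψ, ζ, hψc, hζc, hψ0, hζ0, hζ1, hcons, rfl⟩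
  have hle : OmegaR1 B h ≤ energyR1 B h ψ ζ := by
    unfold OmegaR1
    exact csInf_le ⟨0, fun E hE => hnonneg E hE⟩ hmem
  have h0 : 0 ≤ OmegaR1 B h := by
    unfold OmegaR1
    exact Real.sInf_nonneg hnonneg
  calc (OmegaR1 B h)^2 ≤ (energyR1 B h ψ ζ)^2 := pow_le_pow_left₀ h0 hle 2
    _ = lam1 := by
      rw [hE, hlam, besselI_one, besselI_two]
      have hκ0 : κ ≠ 0 := hκpos.ne'
      have huu0 : uu κ ≠ 0 := huuκ.ne'
      have h1 : 1 - 4*vv κ/(κ*uu κ) = 4*D := by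
        rw [hDdef]; ring
      rw [h1]
      field_simp
      linear_combination ht2'
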